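/- Let N ≥ 1 and L ≥ 1 be integers and let ω₁,…,ω_N be real numbers. Then det( (i+L−1)! · e^{ω_j} · L_{i+L−1}(−ω_j) )_{i,j=1}^N = Δ(ω₁,…,ω_N) · ∏_{i=1}^N e^{ω_i} · Ñ_L / ( L! · ∏_{j=1}^{L−1} (j!)² ). (This is the paper's relation 𝒩_L = (−1)^{N(N−1)} N! Δ(ω) ∏ e^{ω_i} Ñ_L/(L! ∏_{j=1}^{L−1}(j!)²) between the normalization 𝒩_L = N!·det G, with G_{ij} = (i+L−1)! e^{ω_j} L_{i+L−1}(−ω_j), and the multiple-integral normalization Ñ_L.) -/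

import Mathlib

open MeasureTheory Finset Matrix

/-- The entire function `₀F₁(1;x) = ∑ xⁿ/(n!)²` (real argument). -/
noncomputable def f01 (x : ℝ) : ℝ := ∑' n : ℕ, x ^ n / ((n.factorial : ℝ)) ^ 2

/-- The entire function `₀F₁(1;x) = ∑ xⁿ/(n!)²` (complex argument). -/
noncomputable def f01C (x : ℂ) : ℂ := ∑' n : ℕ, x ^ n / ((n.factorial : ℂ)) ^ 2

/-- Vandermonde product `Δ(x₁,…,x_m) = ∏_{i<j} (x_j − x_i)`. -/
noncomputable def vand {m : ℕ} (x : Fin m → ℝ) : ℝ :=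
  ∏ p ∈ Finset.univ.filter (fun p : Fin m × Fin m => p.1 < p.2), (x p.2 - x p.1)

/-- The nonnegative orthant `[0,∞)^m`. -/
def orth (m : ℕ) : Set (Fin m → ℝ) := Set.univ.pi fun _ => Set.Ici (0 : ℝ)

/-- The joint density `Δ(x)·det(₀F₁(1;ω_k x_j))·∏ x_i^L e^{−x_i}` of the squared
singular values. -/
noncomputable def dens (N L : ℕ) (ω : Fin N → ℝ) (x : Fin N → ℝ) : ℝ :=
  vand x * Matrix.det (Matrix.of fun k j : Fin N => f01 (ω k * x j)) *
    ∏ i, (x i ^ L * Real.exp (-x i))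

/-- The matrix weight `w(X) = exp(−Tr(XX*)+Tr(ΩX)+Tr(X*Ω*))·det(X*X)^L`
(complex-valued; its value is in fact real). -/
noncomputable def W (N L : ℕ) (Ω X : Matrix (Fin N) (Fin N) ℂ) : ℂ :=
  Complex.exp (-Matrix.trace (X * Xᴴ) + Matrix.trace (Ω * X) + Matrix.trace (Xᴴ * Ωᴴ)) *
    Matrix.det (Xᴴ * X) ^ L

/-- Matrix-model average `⟨h⟩ = (∫ h(X) w(X) dX)/(∫ w(X) dX)`, the integrals being
over Lebesgue measure on the 2N² real coordinates of X. -/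
noncomputable def mavg (N L : ℕ) (Ω : Matrix (Fin N) (Fin N) ℂ)
    (h : Matrix (Fin N) (Fin N) ℂ → ℂ) : ℂ :=
  (∫ X : Fin N → Fin N → ℂ, h (Matrix.of X) * W N L Ω (Matrix.of X)) /
    ∫ X : Fin N → Fin N → ℂ, W N L Ω (Matrix.of X)

/-- Eigenvalue-ensemble average `E_{ω,L}[g]` with respect to the density `dens`. -/
noncomputable def Eavg (N L : ℕ) (ω : Fin N → ℝ) (g : (Fin N → ℝ) → ℂ) : ℂ :=
  (∫ x in orth N, g x * (dens N L ω x : ℂ)) /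
    ((∫ x in orth N, dens N L ω x : ℝ) : ℂ)

/-- The normalization `Ñ_L = ∫_{[0,∞)^L} ∏_{i,j}(t_i+ω_j)·Δ(t)²·∏ e^{−t_i} dt`. -/
noncomputable def Ntilde (N L : ℕ) (ω : Fin N → ℝ) : ℝ :=
  ∫ t in orth L, (∏ i, ∏ j, (t i + ω j)) * vand t ^ 2 * ∏ i, Real.exp (-(t i))

/-- The degenerate normalization `Ñ_L(ρ) = ∫_{[0,∞)^L} ∏ (t_i+ρ)^N·Δ(t)²·∏ e^{−t_i} dt`. -/
noncomputable def NtildeDeg (N L : ℕ) (ρ : ℝ) : ℝ :=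
  ∫ t in orth L, (∏ i, (t i + ρ) ^ N) * vand t ^ 2 * ∏ i, Real.exp (-(t i))

/-- The Laguerre polynomial `L_n(x) = ∑_{k=0}^n (n choose k)(−x)^k/k!`. -/
noncomputable def laguerre (n : ℕ) (x : ℝ) : ℝ :=
  ∑ k ∈ Finset.range (n + 1), (n.choose k : ℝ) * (-x) ^ k / (k.factorial : ℝ)

/-- The monic Laguerre polynomial `π_n(x) = (−1)^n n! L_n(x)`. -/
noncomputable def piL (n : ℕ) (x : ℝ) : ℝ := (-1 : ℝ) ^ n * (n.factorial : ℝ) * laguerre n x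

/-- The Bessel function `J_k(x) = ∑_m (−1)^m (x/2)^{2m+k}/(m!(m+k)!)`. -/
noncomputable def besselJ (k : ℕ) (x : ℝ) : ℝ :=
  ∑' m : ℕ, (-1 : ℝ) ^ m * (x / 2) ^ (2 * m + k) / ((m.factorial : ℝ) * ((m + k).factorial : ℝ))

/-- The moment matrix `G_{i,j} = (i−1)!·e^{ω_j}·L_{i−1}(−ω_j)` (0-based indices). -/
noncomputable def Gmat (N : ℕ) (ω : Fin N → ℝ) : Matrix (Fin N) (Fin N) ℝ :=
  Matrix.of fun i j => ((i : ℕ).factorial : ℝ) * Real.exp (ω j) * laguerre (i : ℕ) (-ω j)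


lemma integrableOn_pow_exp (n : ℕ) :
    IntegrableOn (fun t : ℝ => t ^ n * Real.exp (-t)) (Set.Ioi 0) := by
  have h := Real.GammaIntegral_convergent (s := (n : ℝ) + 1) (by positivity)
  refine h.congr_fun (fun x hx => ?_) measurableSet_Ioi
  have hx' : (0:ℝ) < x := hx
  rw [add_sub_cancel_right]; beta_reduce; rw [Real.rpow_natCast, mul_comm]

lemma integral_pow_exp (n : ℕ) :
    ∫ t in Set.Ioi (0:ℝ), t ^ n * Real.exp (-t) = n.factorial := by
  have h := Real.Gamma_eq_integral (s := (n : ℝ) + 1) (by positivity)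
  rw [Real.Gamma_nat_eq_factorial] at h
  rw [h]
  refine setIntegral_congr_fun measurableSet_Ioi (fun x hx => ?_)
  have hx' : (0:ℝ) < x := hx
  rw [add_sub_cancel_right, Real.rpow_natCast, mul_comm]

/-- `Q a k x = (x+a)(x+a+1)⋯(x+a+k-1)`. -/
noncomputable def Qp (a k : ℕ) (x : ℝ) : ℝ := ∏ i ∈ Finset.range k, (x + a + i)

lemma Qp_zero (a : ℕ) (x : ℝ) : Qp a 0 x = 1 := by simp [Qp]

lemma Qp_succ (a k : ℕ) (x : ℝ) : Qp a (k+1) x = (x + a) * Qp (a+1) k x := by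
  rw [Qp, Finset.prod_range_succ', Qp]
  have h : ∀ i ∈ Finset.range k, (x + (a:ℝ) + ((i+1:ℕ):ℝ)) = (x + ((a+1:ℕ):ℝ) + i) :=
    fun i _ => by push_cast; ring
  rw [Finset.prod_congr rfl h]
  push_cast; ring

lemma Qp_succ' (a k : ℕ) (x : ℝ) : Qp a (k+1) x = Qp a k x * (x + a + k) := by
  rw [Qp, Finset.prod_range_succ, Qp]

lemma Qp_shift (a k : ℕ) (x : ℝ) : Qp a k (x + 1) = Qp (a+1) k x := by
  unfold Qp
  apply Finset.prod_congr rfl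
  intro i _
  push_cast; ring

lemma Qp_diff (a k : ℕ) (x : ℝ) :
    Qp a (k+1) x - Qp a (k+1) (x+1) = -((k:ℝ)+1) * Qp (a+1) k x := by
  rw [Qp_shift, Qp_succ, Qp_succ']
  push_cast; ring

lemma pascal_sum (n : ℕ) (f : ℕ → ℝ) :
    ∑ j ∈ Finset.range (n+2), (-1:ℝ)^j * ((n+1).choose j) * f j
      = ∑ j ∈ Finset.range (n+1), (-1:ℝ)^j * (n.choose j) * (f j - f (j+1)) := by
  have key : ∀ j ∈ Finset.range (n+1), (-1:ℝ)^(j+1) * (((n+1).choose (j+1) : ℕ):ℝ) * f (j+1)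
      = -((-1:ℝ)^j * (n.choose j) * f (j+1)) + (-1:ℝ)^(j+1) * (n.choose (j+1)) * f (j+1) := by
    intro j _; rw [Nat.choose_succ_succ]; push_cast; ring
  rw [Finset.sum_range_succ' (fun j => (-1:ℝ)^j * ((n+1).choose j) * f j) (n+1)]
  have e := Finset.sum_congr rfl key
  rw [e, Finset.sum_add_distrib, add_assoc]
  have e2 : (∑ j ∈ Finset.range (n+1), (-1:ℝ)^(j+1) * ((n.choose (j+1) : ℕ):ℝ) * f (j+1)) +
      (-1:ℝ)^0 * ((((n+1)).choose 0 : ℕ):ℝ) * f 0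
      = ∑ j ∈ Finset.range (n+1), (-1:ℝ)^j * (n.choose j) * f j := by
    have h0 : ((-1:ℝ)^0 * ((((n+1)).choose 0 : ℕ):ℝ) * f 0)
        = (-1:ℝ)^0 * (((n.choose 0 : ℕ)):ℝ) * f 0 := by norm_num
    rw [h0, ← Finset.sum_range_succ' (fun j => (-1:ℝ)^j * (n.choose j) * f j) (n+1),
      Finset.sum_range_succ (fun j => (-1:ℝ)^j * (n.choose j) * f j) (n+1),
      Nat.choose_succ_self]
    norm_num
  rw [e2, ← Finset.sum_add_distrib]
  apply Finset.sum_congr rfl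
  intro j _
  ring

/-- Alternating binomial sum against the rising factorial. -/
lemma A_eq (n : ℕ) : ∀ a k : ℕ, k ≤ n →
    (∑ j ∈ Finset.range (n+1), (-1:ℝ)^j * (n.choose j) * Qp a k j) =
      if k = n then (-1:ℝ)^n * n.factorial else 0 := by
  induction n with
  | zero =>
    intro a k hk
    interval_cases k
    simp [Qp_zero]
  | succ n ih =>
    intro a k hk
    rw [show n + 1 + 1 = n + 2 from rfl, pascal_sum n (fun j => Qp a k j)]
    match k with
    | 0 =>
      simp [Qp_zero]
    | (k'+1) =>
      have hd : ∀ j : ℕ, Qp a (k'+1) (j:ℝ) - Qp a (k'+1) ((j:ℝ)+1) = -((k':ℝ)+1) * Qp (a+1) k' j :=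
        fun j => Qp_diff a k' j
      calc (∑ j ∈ Finset.range (n+1), (-1:ℝ)^j * (n.choose j) * (Qp a (k'+1) j - Qp a (k'+1) ((j+1:ℕ))))
          = -((k':ℝ)+1) * ∑ j ∈ Finset.range (n+1), (-1:ℝ)^j * (n.choose j) * Qp (a+1) k' j := by
            rw [Finset.mul_sum]
            apply Finset.sum_congr rfl
            intro j _
            push_cast
            rw [hd j]
            ring
        _ = if k' + 1 = n + 1 then (-1:ℝ)^(n+1) * (n+1).factorial else 0 := by
            rw [ih (a+1) k' (Nat.lt_succ_iff.mp hk)]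
            by_cases h : k' = n
            · subst h
              simp only [if_pos rfl, if_pos rfl, Nat.factorial_succ]
              push_cast
              ring
            · have h2 : ¬ (k' + 1 = n + 1) := by omega
              simp [h, h2]


/-- Coefficients of `piL`. -/
noncomputable def cf (n k : ℕ) : ℝ :=
  (-1:ℝ)^n * (n.factorial : ℝ) * (n.choose k : ℝ) * (-1:ℝ)^k / (k.factorial : ℝ)

lemma piL_eq_sum (n : ℕ) (x : ℝ) :
    piL n x = ∑ k ∈ Finset.range (n+1), cf n k * x^k := by
  unfold piL laguerre
  rw [Finset.mul_sum]
  apply Finset.sum_congr rfl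
  intro k _
  unfold cf
  rw [neg_pow]
  ring

lemma cf_self (n : ℕ) : cf n n = 1 := by
  unfold cf
  rw [Nat.choose_self]
  have h1 : (-1:ℝ)^n * (-1:ℝ)^n = 1 := by
    rw [← pow_add]
    exact Even.neg_one_pow ⟨n, (two_mul n).symm ▸ by ring⟩
  have h2 : ((n.factorial : ℝ)) ≠ 0 := Nat.cast_ne_zero.mpr (Nat.factorial_ne_zero n)
  field_simp
  linear_combination h1

lemma fact_ratio (j k : ℕ) : (((j+k).factorial : ℝ)) = (j.factorial : ℝ) * Qp 1 k j := by
  induction k with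
  | zero => simp [Qp_zero]
  | succ k ih =>
    rw [Qp_succ', show j + (k+1) = (j+k)+1 from rfl, Nat.factorial_succ]
    push_cast
    rw [ih]
    ring

lemma pow_piL_exp_expand (k b : ℕ) :
    (fun t : ℝ => t^k * piL b t * Real.exp (-t))
      = fun t => ∑ j ∈ Finset.range (b+1), cf b j * (t^(j+k) * Real.exp (-t)) := by
  funext t
  rw [piL_eq_sum, Finset.mul_sum, Finset.sum_mul]
  apply Finset.sum_congr rfl
  intro j _
  rw [pow_add]
  ring

lemma integrableOn_pow_piL_exp (k b : ℕ) :
    IntegrableOn (fun t : ℝ => t^k * piL b t * Real.exp (-t)) (Set.Ioi 0) := by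
  rw [pow_piL_exp_expand]
  exact integrable_finset_sum _ fun j _ => ((integrableOn_pow_exp (j+k)).const_mul _)

lemma piL_piL_exp_expand (a b : ℕ) :
    (fun t : ℝ => piL a t * piL b t * Real.exp (-t))
      = fun t => ∑ k ∈ Finset.range (a+1), cf a k * (t^k * piL b t * Real.exp (-t)) := by
  funext t
  conv_lhs => rw [piL_eq_sum a t, Finset.sum_mul, Finset.sum_mul]
  apply Finset.sum_congr rfl
  intro k _
  ring

lemma integrableOn_piL_piL_exp (a b : ℕ) :
    IntegrableOn (fun t : ℝ => piL a t * piL b t * Real.exp (-t)) (Set.Ioi 0) := by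
  rw [piL_piL_exp_expand]
  exact integrable_finset_sum _ fun k _ => ((integrableOn_pow_piL_exp k b).const_mul _)

lemma mono_piL (k b : ℕ) (hk : k ≤ b) :
    ∫ t in Set.Ioi (0:ℝ), t^k * piL b t * Real.exp (-t)
      = if k = b then ((b.factorial : ℝ))^2 else 0 := by
  rw [pow_piL_exp_expand]
  rw [integral_finset_sum _ (fun j _ => ((integrableOn_pow_exp (j+k)).const_mul _))]
  have e1 : ∀ j ∈ Finset.range (b+1),
      (∫ t in Set.Ioi (0:ℝ), cf b j * (t^(j+k) * Real.exp (-t)))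
        = (-1:ℝ)^b * (b.factorial : ℝ) * ((-1:ℝ)^j * (b.choose j : ℝ) * Qp 1 k j) := by
    intro j _
    rw [MeasureTheory.integral_const_mul, integral_pow_exp, fact_ratio j k]
    unfold cf
    have h2 : ((j.factorial : ℝ)) ≠ 0 := Nat.cast_ne_zero.mpr (Nat.factorial_ne_zero j)
    field_simp
  rw [Finset.sum_congr rfl e1, ← Finset.mul_sum]
  have e2 : (∑ j ∈ Finset.range (b+1), (-1:ℝ)^j * (b.choose j : ℝ) * Qp 1 k j)
      = if k = b then (-1:ℝ)^b * b.factorial else 0 := A_eq b 1 k hk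
  rw [e2]
  by_cases h : k = b
  · subst h
    rw [if_pos rfl, if_pos rfl]
    have h1 : (-1:ℝ)^k * (-1:ℝ)^k = 1 := by
      rw [← pow_add]
      exact Even.neg_one_pow ⟨k, (two_mul k).symm ▸ by ring⟩
    linear_combination ((k.factorial:ℝ))^2 * h1
  · simp [h]

lemma piL_orth_le (a b : ℕ) (hab : a ≤ b) :
    ∫ t in Set.Ioi (0:ℝ), piL a t * piL b t * Real.exp (-t)
      = if a = b then ((a.factorial : ℝ))^2 else 0 := by
  rw [piL_piL_exp_expand]
  rw [integral_finset_sum _ (fun k _ => ((integrableOn_pow_piL_exp k b).const_mul _))]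
  have e1 : ∀ k ∈ Finset.range (a+1),
      (∫ t in Set.Ioi (0:ℝ), cf a k * (t^k * piL b t * Real.exp (-t)))
        = cf a k * (if k = b then ((b.factorial : ℝ))^2 else 0) := by
    intro k hk
    rw [MeasureTheory.integral_const_mul, mono_piL k b (le_trans (Nat.lt_succ_iff.mp (Finset.mem_range.mp hk)) hab)]
  rw [Finset.sum_congr rfl e1]
  have e3 : ∀ k, cf a k * (if k = b then ((b.factorial : ℝ))^2 else 0)
      = if k = b then cf a k * ((b.factorial : ℝ))^2 else 0 := by
    intro k; split <;> simp
  rw [Finset.sum_congr rfl (fun k _ => e3 k), Finset.sum_ite_eq' (Finset.range (a+1)) b]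
  by_cases h : a = b
  · subst h
    simp [cf_self]
  · have : b ∉ Finset.range (a+1) := by
      simp only [Finset.mem_range]
      omega
    simp [this, h]

lemma piL_orth (a b : ℕ) :
    ∫ t in Set.Ioi (0:ℝ), piL a t * piL b t * Real.exp (-t)
      = if a = b then ((a.factorial : ℝ))^2 else 0 := by
  rcases le_total a b with h | h
  · exact piL_orth_le a b h
  · have := piL_orth_le b a h
    have comm : (fun t : ℝ => piL b t * piL a t * Real.exp (-t))
        = fun t : ℝ => piL a t * piL b t * Real.exp (-t) := by
      funext t; ring
    rw [comm] at this
    rw [this]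
    by_cases hab : a = b
    · subst hab; simp
    · simp [hab, Ne.symm hab]

/-- `piL` as a polynomial. -/
noncomputable def piLpoly (n : ℕ) : Polynomial ℝ :=
  ∑ k ∈ Finset.range (n+1), Polynomial.C (cf n k) * Polynomial.X ^ k

lemma piLpoly_eval (n : ℕ) (x : ℝ) : (piLpoly n).eval x = piL n x := by
  rw [piL_eq_sum, piLpoly, Polynomial.eval_finset_sum]
  simp

lemma piLpoly_coeff_of_gt {n m : ℕ} (h : n < m) : (piLpoly n).coeff m = 0 := by
  rw [piLpoly, Polynomial.finset_sum_coeff]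
  apply Finset.sum_eq_zero
  intro k hk
  rw [Polynomial.coeff_C_mul, Polynomial.coeff_X_pow, if_neg (by simp at hk; omega)]
  simp

lemma piLpoly_coeff_self (n : ℕ) : (piLpoly n).coeff n = 1 := by
  rw [piLpoly, Polynomial.finset_sum_coeff]
  have : ∀ k ∈ Finset.range (n+1), (Polynomial.C (cf n k) * Polynomial.X ^ k).coeff n
      = if k = n then cf n k else 0 := by
    intro k hk
    rw [Polynomial.coeff_C_mul, Polynomial.coeff_X_pow]
    by_cases h : k = n
    · simp [h]
    · rw [if_neg (fun hh => h hh.symm), if_neg h, mul_zero]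
  rw [Finset.sum_congr rfl this, Finset.sum_ite_eq' (Finset.range (n+1)) n (fun k => cf n k),
    if_pos (Finset.self_mem_range_succ n), cf_self]

lemma piLpoly_natDegree (n : ℕ) : (piLpoly n).natDegree = n := by
  have hle : (piLpoly n).natDegree ≤ n := Polynomial.natDegree_le_iff_coeff_eq_zero.mpr
    (fun m hm => piLpoly_coeff_of_gt hm)
  exact Polynomial.natDegree_eq_of_le_of_coeff_ne_zero hle (by rw [piLpoly_coeff_self]; norm_num)

lemma piLpoly_monic (n : ℕ) : (piLpoly n).Monic :=
  Polynomial.monic_of_natDegree_le_of_coeff_eq_one n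
    (Polynomial.natDegree_le_iff_coeff_eq_zero.mpr (fun m hm => piLpoly_coeff_of_gt hm))
    (piLpoly_coeff_self n)

/-- `vand` in nested `ite` normal form. -/
lemma vand_eq_ite {m : ℕ} (x : Fin m → ℝ) :
    vand x = ∏ i : Fin m, ∏ j : Fin m, (if i < j then x j - x i else 1) := by
  rw [vand, Finset.prod_filter, ← Finset.univ_product_univ, Finset.prod_product]

/-- `vand` as nested product over `Ioi`. -/
lemma vand_eq_Ioi {m : ℕ} (x : Fin m → ℝ) :
    vand x = ∏ i : Fin m, ∏ j ∈ Finset.Ioi i, (x j - x i) := by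
  rw [vand_eq_ite]
  apply Finset.prod_congr rfl
  intro i _
  rw [← Finset.prod_filter (fun j => i < j) (fun j => x j - x i), Finset.filter_lt_eq_Ioi]

/-- `vand` equals the determinant of the monic-Laguerre matrix. -/
lemma vand_eq_det_piL {m : ℕ} (x : Fin m → ℝ) :
    vand x = Matrix.det (Matrix.of fun i j : Fin m => piL (j:ℕ) (x i)) := by
  have h := Matrix.det_eval_matrixOfPolynomials_eq_det_vandermonde x
    (fun j : Fin m => piLpoly (j:ℕ))
    (fun i => piLpoly_natDegree i) (fun i => piLpoly_monic i)
  rw [Matrix.det_vandermonde] at h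
  rw [vand_eq_Ioi, h]
  congr 1
  ext i j
  rw [Matrix.of_apply, Matrix.of_apply, piLpoly_eval]

lemma vand_append (L N : ℕ) (t : Fin L → ℝ) (y : Fin N → ℝ) :
    vand (Fin.append t y) = vand t * vand y * ∏ i : Fin L, ∏ j : Fin N, (y j - t i) := by
  rw [vand_eq_ite]
  rw [Fin.prod_univ_add]
  have inner : ∀ a : Fin (L+N), (∏ b : Fin (L+N), (if a < b then Fin.append t y b - Fin.append t y a else 1))
      = (∏ i : Fin L, (if a < Fin.castAdd N i then Fin.append t y (Fin.castAdd N i) - Fin.append t y a else 1))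
        * ∏ j : Fin N, (if a < Fin.natAdd L j then Fin.append t y (Fin.natAdd L j) - Fin.append t y a else 1) := by
    intro a
    rw [← Equiv.prod_comp finSumFinEquiv
      (fun b => (if a < b then Fin.append t y b - Fin.append t y a else 1))]
    rw [Fintype.prod_sum_type]
    simp only [finSumFinEquiv_apply_left, finSumFinEquiv_apply_right]
    rfl
  rw [Finset.prod_congr rfl (fun a _ => inner (Fin.castAdd N a)),
      Finset.prod_congr rfl (fun a _ => inner (Fin.natAdd L a))]
  simp only [Fin.append_left, Fin.append_right]
  have hcc : ∀ (i j : Fin L), (Fin.castAdd N i < Fin.castAdd N j) = (i < j) := by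
    intro i j; simp only [eq_iff_iff, Fin.lt_def, Fin.coe_castAdd]
  have hcn : ∀ (i : Fin L) (j : Fin N), (Fin.castAdd N i < Fin.natAdd L j) = True := by
    intro i j; simp only [Fin.lt_def, Fin.coe_castAdd, Fin.coe_natAdd, eq_iff_iff, iff_true]
    omega
  have hnc : ∀ (j : Fin N) (i : Fin L), (Fin.natAdd L j < Fin.castAdd N i) = False := by
    intro j i; simp only [Fin.lt_def, Fin.coe_castAdd, Fin.coe_natAdd, eq_iff_iff, iff_false, not_lt]
    omega
  have hnn : ∀ (i j : Fin N), (Fin.natAdd L i < Fin.natAdd L j) = (i < j) := by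
    intro i j; simp only [eq_iff_iff, Fin.lt_def, Fin.coe_natAdd, Nat.add_lt_add_iff_left]
  simp only [hcc, hcn, hnc, hnn, if_true, if_false]
  rw [Finset.prod_mul_distrib, Finset.prod_mul_distrib]
  rw [vand_eq_ite t, vand_eq_ite y]
  simp only [Finset.prod_const_one]
  ring

lemma sum_card_Ioi (N : ℕ) :
    (∑ i : Fin N, (Finset.Ioi i).card) = ∑ i : Fin N, (i:ℕ) := by
  have h1 : ∀ i : Fin N, (Finset.Ioi i).card = (i.rev : ℕ) := by
    intro i
    rw [Fin.card_Ioi, Fin.val_rev]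
    omega
  rw [Finset.sum_congr rfl (fun i _ => h1 i)]
  exact Equiv.sum_comp Fin.revPerm (fun i : Fin N => (i : ℕ))

lemma vand_neg (N : ℕ) (ω : Fin N → ℝ) :
    vand (fun j => - ω j) = (-1:ℝ)^(∑ i : Fin N, (i:ℕ)) * vand ω := by
  rw [vand_eq_Ioi, vand_eq_Ioi]
  have h : ∀ i : Fin N, (∏ j ∈ Finset.Ioi i, (-ω j - -ω i))
      = (-1:ℝ)^(Finset.Ioi i).card * ∏ j ∈ Finset.Ioi i, (ω j - ω i) := by
    intro i
    rw [← Finset.prod_const, ← Finset.prod_mul_distrib]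
    apply Finset.prod_congr rfl
    intro j _
    ring
  rw [Finset.prod_congr rfl (fun i _ => h i), Finset.prod_mul_distrib,
    Finset.prod_pow_eq_pow_sum, sum_card_Ioi]

lemma orth_measurable (m : ℕ) : MeasurableSet (orth m) :=
  MeasurableSet.univ_pi (fun _ => measurableSet_Ici)

lemma orth_indicator (m : ℕ) (f : Fin m → ℝ → ℝ) :
    (orth m).indicator (fun t => ∏ i, f i (t i))
      = fun t => ∏ i, (Set.Ici (0:ℝ)).indicator (f i) (t i) := by
  funext t
  by_cases h : t ∈ orth m
  · rw [Set.indicator_of_mem h]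
    exact Finset.prod_congr rfl fun i _ =>
      (Set.indicator_of_mem (h i (Set.mem_univ i)) (f i)).symm
  · rw [Set.indicator_of_notMem h]
    obtain ⟨i, hi⟩ := not_forall.mp (fun hh => h (Set.mem_univ_pi.mpr hh))
    exact (Finset.prod_eq_zero (Finset.mem_univ i)
      (Set.indicator_of_notMem hi (f i))).symm

lemma integral_orth_prod (m : ℕ) (f : Fin m → ℝ → ℝ) :
    ∫ t in orth m, ∏ i, f i (t i) = ∏ i, ∫ s in Set.Ici (0:ℝ), f i s := by
  rw [← MeasureTheory.integral_indicator (orth_measurable m), orth_indicator,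
    MeasureTheory.integral_fintype_prod_volume_eq_prod
      (fun i => (Set.Ici (0:ℝ)).indicator (f i))]
  exact Finset.prod_congr rfl fun i _ =>
    MeasureTheory.integral_indicator measurableSet_Ici

lemma integrableOn_orth_prod (m : ℕ) (f : Fin m → ℝ → ℝ)
    (hf : ∀ i, IntegrableOn (f i) (Set.Ici 0)) :
    IntegrableOn (fun t => ∏ i, f i (t i)) (orth m) := by
  have h2 : Integrable ((orth m).indicator fun t => ∏ i, f i (t i)) := by
    rw [orth_indicator]
    exact MeasureTheory.Integrable.fintype_prod
      (fun i => (MeasureTheory.integrable_indicator_iff measurableSet_Ici).mpr (hf i))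
  exact (MeasureTheory.integrable_indicator_iff (orth_measurable m)).mp h2

/-- `vand` as a signed sum over permutations of products of `piL` values. -/
lemma vand_perm_sum {m : ℕ} (x : Fin m → ℝ) :
    vand x = ∑ σ : Equiv.Perm (Fin m),
      ((Equiv.Perm.sign σ : ℤ) : ℝ) * ∏ j, piL ((σ j : Fin m) : ℕ) (x j) := by
  rw [vand_eq_det_piL x, ← Matrix.det_transpose, Matrix.det_apply']
  apply Finset.sum_congr rfl
  intro σ _
  rfl

section StepB
variable (L N : ℕ) (y : Fin N → ℝ)

/-- Integrand functions. -/
noncomputable def gF (τ : Equiv.Perm (Fin L)) (σ : Equiv.Perm (Fin (L+N))) (i : Fin L) :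
    ℝ → ℝ :=
  fun s => piL ((τ i : Fin L) : ℕ) s * piL ((σ (Fin.castAdd N i) : Fin (L+N)) : ℕ) s *
    Real.exp (-s)

noncomputable def cF (τ : Equiv.Perm (Fin L)) (σ : Equiv.Perm (Fin (L+N))) : ℝ :=
  ((Equiv.Perm.sign τ : ℤ) : ℝ) * ((Equiv.Perm.sign σ : ℤ) : ℝ) *
    ∏ j : Fin N, piL ((σ (Fin.natAdd L j) : Fin (L+N)) : ℕ) (y j)

lemma integrand_expand (t : Fin L → ℝ) :
    vand t * vand (Fin.append t y) * ∏ i, Real.exp (-(t i))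
      = ∑ τ : Equiv.Perm (Fin L), ∑ σ : Equiv.Perm (Fin (L+N)),
          cF L N y τ σ * ∏ i : Fin L, gF L N τ σ i (t i) := by
  rw [vand_perm_sum t, vand_perm_sum (Fin.append t y), Finset.sum_mul, Finset.sum_mul]
  apply Finset.sum_congr rfl
  intro τ _
  rw [Finset.mul_sum, Finset.sum_mul]
  apply Finset.sum_congr rfl
  intro σ _
  rw [Fin.prod_univ_add (fun k => piL ((σ k : Fin (L+N)) : ℕ) (Fin.append t y k))]
  simp only [Fin.append_left, Fin.append_right]
  unfold cF gF
  rw [Finset.prod_mul_distrib, Finset.prod_mul_distrib]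
  ring

/-- Value of the inner integral for a fixed pair of permutations. -/
lemma inner_integral (τ : Equiv.Perm (Fin L)) (σ : Equiv.Perm (Fin (L+N))) :
    (∫ t in orth L, cF L N y τ σ * ∏ i : Fin L, gF L N τ σ i (t i))
      = cF L N y τ σ * ∏ i : Fin L,
          (if ((τ i : Fin L) : ℕ) = ((σ (Fin.castAdd N i) : Fin (L+N)) : ℕ)
            then (((τ i : Fin L) : ℕ).factorial : ℝ)^2 else 0) := by
  rw [MeasureTheory.integral_const_mul, integral_orth_prod L (gF L N τ σ)]
  congr 1
  apply Finset.prod_congr rfl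
  intro i _
  rw [MeasureTheory.integral_Ici_eq_integral_Ioi]
  exact piL_orth _ _

end StepB

section StepB2
variable (L N : ℕ) (y : Fin N → ℝ)

noncomputable def Amat (τ : Equiv.Perm (Fin L)) : Matrix (Fin L) (Fin L) ℝ :=
  Matrix.of fun a i => if a = τ i then ((((τ i : Fin L) : ℕ)).factorial : ℝ)^2 else 0
noncomputable def Bmat : Matrix (Fin L) (Fin N) ℝ :=
  Matrix.of fun a j => piL ((a : ℕ)) (y j)
noncomputable def Dmat : Matrix (Fin N) (Fin N) ℝ :=
  Matrix.of fun a j => piL (L + (a : ℕ)) (y j)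
noncomputable def Mmat (τ : Equiv.Perm (Fin L)) : Matrix (Fin (L+N)) (Fin (L+N)) ℝ :=
  (Matrix.fromBlocks (Amat L τ) (Bmat L N y) 0 (Dmat L N y)).submatrix
    finSumFinEquiv.symm finSumFinEquiv.symm

lemma Mmat_castAdd (τ : Equiv.Perm (Fin L)) (σ : Equiv.Perm (Fin (L+N))) (i : Fin L) :
    Mmat L N y τ (σ (Fin.castAdd N i)) (Fin.castAdd N i)
      = if ((τ i : Fin L) : ℕ) = ((σ (Fin.castAdd N i) : Fin (L+N)) : ℕ)
          then ((((τ i : Fin L) : ℕ)).factorial : ℝ)^2 else 0 := by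
  unfold Mmat
  rw [Matrix.submatrix_apply, finSumFinEquiv_symm_apply_castAdd]
  rcases hE : finSumFinEquiv.symm (σ (Fin.castAdd N i)) with a | a
  · rw [Matrix.fromBlocks_apply₁₁]
    have hσ : σ (Fin.castAdd N i) = Fin.castAdd N a := by
      have h2 := (Equiv.symm_apply_eq finSumFinEquiv).mp hE
      rwa [finSumFinEquiv_apply_left] at h2
    rw [hσ]
    unfold Amat
    rw [Matrix.of_apply]
    by_cases h : a = τ i
    · subst h
      simp [Fin.coe_castAdd]
    · have h2 : ¬ (((τ i : Fin L) : ℕ) = ((a : Fin L) : ℕ)) := fun hc => h (Fin.ext hc.symm)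
      simp [h, h2, Fin.coe_castAdd]
  · rw [Matrix.fromBlocks_apply₂₁]
    have hσ : σ (Fin.castAdd N i) = Fin.natAdd L a := by
      have h2 := (Equiv.symm_apply_eq finSumFinEquiv).mp hE
      rwa [finSumFinEquiv_apply_right] at h2
    have h2 : ¬ (((τ i : Fin L) : ℕ) = ((σ (Fin.castAdd N i) : Fin (L+N)) : ℕ)) := by
      rw [hσ]
      simp only [Fin.coe_natAdd]
      have := (τ i).isLt
      omega
    simp [h2]

lemma Mmat_natAdd (τ : Equiv.Perm (Fin L)) (σ : Equiv.Perm (Fin (L+N))) (j : Fin N) :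
    Mmat L N y τ (σ (Fin.natAdd L j)) (Fin.natAdd L j)
      = piL ((σ (Fin.natAdd L j) : Fin (L+N)) : ℕ) (y j) := by
  unfold Mmat
  rw [Matrix.submatrix_apply, finSumFinEquiv_symm_apply_natAdd]
  rcases hE : finSumFinEquiv.symm (σ (Fin.natAdd L j)) with a | a
  · rw [Matrix.fromBlocks_apply₁₂]
    have hσ : σ (Fin.natAdd L j) = Fin.castAdd N a := by
      have h2 := (Equiv.symm_apply_eq finSumFinEquiv).mp hE
      rwa [finSumFinEquiv_apply_left] at h2
    rw [hσ]
    unfold Bmat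
    rw [Matrix.of_apply, Fin.coe_castAdd]
  · rw [Matrix.fromBlocks_apply₂₂]
    have hσ : σ (Fin.natAdd L j) = Fin.natAdd L a := by
      have h2 := (Equiv.symm_apply_eq finSumFinEquiv).mp hE
      rwa [finSumFinEquiv_apply_right] at h2
    rw [hσ]
    unfold Dmat
    rw [Matrix.of_apply, Fin.coe_natAdd]

lemma det_Amat (τ : Equiv.Perm (Fin L)) :
    (Amat L τ).det = ((Equiv.Perm.sign τ : ℤ) : ℝ) * ∏ i : Fin L, (((i : ℕ)).factorial : ℝ)^2 := by
  have h : Amat L τ = (Matrix.diagonal (fun a : Fin L => (((a : ℕ)).factorial : ℝ)^2)).submatrix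
      id ⇑τ := by
    ext a i
    simp only [Matrix.submatrix_apply, id_eq, Matrix.diagonal_apply, Amat, Matrix.of_apply]
    by_cases hai : a = τ i
    · rw [if_pos hai, if_pos hai, hai]
    · rw [if_neg hai, if_neg hai]
  rw [h, Matrix.det_permute', Matrix.det_diagonal]

lemma sum_sigma (τ : Equiv.Perm (Fin L)) :
    (∑ σ : Equiv.Perm (Fin (L+N)), cF L N y τ σ * ∏ i : Fin L,
        (if ((τ i : Fin L) : ℕ) = ((σ (Fin.castAdd N i) : Fin (L+N)) : ℕ)
          then (((τ i : Fin L) : ℕ).factorial : ℝ)^2 else 0))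
      = ((Equiv.Perm.sign τ : ℤ) : ℝ) * (Mmat L N y τ).det := by
  rw [Matrix.det_apply', Finset.mul_sum]
  apply Finset.sum_congr rfl
  intro σ _
  rw [Fin.prod_univ_add (fun k => Mmat L N y τ (σ k) k)]
  rw [Finset.prod_congr rfl (fun i _ => Mmat_castAdd L N y τ σ i),
      Finset.prod_congr rfl (fun j _ => Mmat_natAdd L N y τ σ j)]
  unfold cF
  ring

lemma sign_sq (τ : Equiv.Perm (Fin L)) :
    ((Equiv.Perm.sign τ : ℤ) : ℝ) * ((Equiv.Perm.sign τ : ℤ) : ℝ) = 1 := by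
  rcases Int.units_eq_one_or (Equiv.Perm.sign τ) with h | h <;> rw [h] <;> norm_num

lemma stepB :
    (∫ t in orth L, vand t * vand (Fin.append t y) * ∏ i, Real.exp (-(t i)))
      = (L.factorial : ℝ) * (∏ i : Fin L, (((i : ℕ)).factorial : ℝ)^2) * (Dmat L N y).det := by
  have hInt : ∀ (τ : Equiv.Perm (Fin L)) (σ : Equiv.Perm (Fin (L+N))),
      IntegrableOn (fun t => cF L N y τ σ * ∏ i : Fin L, gF L N τ σ i (t i)) (orth L) := by
    intro τ σ
    exact (integrableOn_orth_prod L (gF L N τ σ) (fun i =>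
      Iff.mpr integrableOn_Ici_iff_integrableOn_Ioi (integrableOn_piL_piL_exp _ _))).const_mul _
  calc (∫ t in orth L, vand t * vand (Fin.append t y) * ∏ i, Real.exp (-(t i)))
      = ∫ t in orth L, ∑ τ : Equiv.Perm (Fin L), ∑ σ : Equiv.Perm (Fin (L+N)),
          cF L N y τ σ * ∏ i : Fin L, gF L N τ σ i (t i) := by
        exact MeasureTheory.integral_congr_ae (Filter.Eventually.of_forall
          (fun t => integrand_expand L N y t))
    _ = ∑ τ : Equiv.Perm (Fin L), ∑ σ : Equiv.Perm (Fin (L+N)),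
          ∫ t in orth L, cF L N y τ σ * ∏ i : Fin L, gF L N τ σ i (t i) := by
        rw [MeasureTheory.integral_finset_sum _
          (fun τ _ => integrable_finset_sum _ (fun σ _ => hInt τ σ))]
        exact Finset.sum_congr rfl (fun τ _ =>
          MeasureTheory.integral_finset_sum _ (fun σ _ => hInt τ σ))
    _ = ∑ τ : Equiv.Perm (Fin L), ∑ σ : Equiv.Perm (Fin (L+N)),
          cF L N y τ σ * ∏ i : Fin L,
            (if ((τ i : Fin L) : ℕ) = ((σ (Fin.castAdd N i) : Fin (L+N)) : ℕ)
              then (((τ i : Fin L) : ℕ).factorial : ℝ)^2 else 0) := by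
        exact Finset.sum_congr rfl (fun τ _ => Finset.sum_congr rfl
          (fun σ _ => inner_integral L N y τ σ))
    _ = ∑ τ : Equiv.Perm (Fin L), ((Equiv.Perm.sign τ : ℤ) : ℝ) * (Mmat L N y τ).det := by
        exact Finset.sum_congr rfl (fun τ _ => sum_sigma L N y τ)
    _ = ∑ τ : Equiv.Perm (Fin L),
          (∏ i : Fin L, (((i : ℕ)).factorial : ℝ)^2) * (Dmat L N y).det := by
        apply Finset.sum_congr rfl
        intro τ _
        rw [Mmat, Matrix.det_submatrix_equiv_self, Matrix.det_fromBlocks_zero₂₁, det_Amat]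
        have hs := sign_sq L τ
        linear_combination ((∏ i : Fin L, (((i : ℕ)).factorial : ℝ)^2) * (Dmat L N y).det) * hs
    _ = (L.factorial : ℝ) * (∏ i : Fin L, (((i : ℕ)).factorial : ℝ)^2) * (Dmat L N y).det := by
        rw [Finset.sum_const, Finset.card_univ, Fintype.card_perm, Fintype.card_fin]
        rw [nsmul_eq_mul]
        ring

end StepB2

lemma stepA (L N : ℕ) (ω : Fin N → ℝ) :
    (∫ t in orth L, vand t * vand (Fin.append t (fun j => -ω j)) * ∏ i, Real.exp (-(t i)))
      = (-1:ℝ)^(L*N) * vand (fun j => -ω j) * Ntilde N L ω := by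
  have hpt : ∀ t : Fin L → ℝ,
      vand t * vand (Fin.append t (fun j => -ω j)) * ∏ i, Real.exp (-(t i))
        = ((-1:ℝ)^(L*N) * vand (fun j => -ω j)) *
            ((∏ i, ∏ j, (t i + ω j)) * vand t ^ 2 * ∏ i, Real.exp (-(t i))) := by
    intro t
    rw [vand_append]
    have h2 : ∀ i : Fin L, (∏ j : Fin N, ((fun j => -ω j) j - t i))
        = (-1:ℝ)^N * ∏ j : Fin N, (t i + ω j) := by
      intro i
      have : ∀ j ∈ Finset.univ, ((fun j => -ω j) j - t i) = (-1:ℝ) * (t i + ω j) :=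
        fun j _ => by ring
      rw [Finset.prod_congr rfl this, Finset.prod_mul_distrib, Finset.prod_const,
        Finset.card_univ, Fintype.card_fin]
    rw [Finset.prod_congr rfl (fun i _ => h2 i), Finset.prod_mul_distrib, Finset.prod_const,
      Finset.card_univ, Fintype.card_fin, ← pow_mul, Nat.mul_comm N L]
    ring
  rw [MeasureTheory.integral_congr_ae (Filter.Eventually.of_forall hpt),
    MeasureTheory.integral_const_mul, Ntilde]

theorem statement3 (N L : ℕ) (hN : 1 ≤ N) (hL : 1 ≤ L) (ω : Fin N → ℝ) :
    Matrix.det (Matrix.of fun i j : Fin N =>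
        (((L + (i : ℕ)).factorial : ℝ)) * Real.exp (ω j) * laguerre (L + (i : ℕ)) (-ω j)) =
      vand ω * (∏ i, Real.exp (ω i)) * Ntilde N L ω /
        ((L.factorial : ℝ) * ∏ j ∈ Finset.Icc 1 (L - 1), ((j.factorial : ℝ)) ^ 2) := by
  set y : Fin N → ℝ := fun j => -ω j with hy
  set cLN : ℝ := (-1:ℝ)^(L*N) with hcLN
  set cS : ℝ := (-1:ℝ)^(∑ i : Fin N, (i:ℕ)) with hcS
  set D : ℝ := (Dmat L N y).det with hD
  set P : ℝ := ∏ i : Fin L, (((i : ℕ)).factorial : ℝ)^2 with hP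
  set E : ℝ := ∏ i : Fin N, Real.exp (ω i) with hE
  set F : ℝ := (L.factorial : ℝ) with hF
  -- (2) the key integral identity
  have key : cLN * (cS * vand ω) * Ntilde N L ω = F * P * D := by
    rw [← vand_neg]
    rw [show cLN * vand (fun j => -ω j) * Ntilde N L ω
      = (-1:ℝ)^(L*N) * vand (fun j => -ω j) * Ntilde N L ω from by rw [hcLN]]
    rw [← stepA L N ω, stepB L N y]
  -- (3) product of factorials
  have hP1 : (∏ j ∈ Finset.Icc 1 (L - 1), ((j.factorial : ℝ)) ^ 2) = P := by
    rw [hP, Fin.prod_univ_eq_prod_range (fun j => ((j.factorial : ℝ))^2) L,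
      Finset.range_eq_Ico, Finset.prod_eq_prod_Ico_succ_bot hL]
    have hIco : Finset.Ico 1 L = Finset.Icc 1 (L-1) := by
      rw [← Finset.Ico_add_one_right_eq_Icc]
      congr 1
      omega
    rw [hIco]
    norm_num
  -- (1) LHS determinant factorization
  have hmat : (Matrix.of fun i j : Fin N =>
      (((L + (i : ℕ)).factorial : ℝ)) * Real.exp (ω j) * laguerre (L + (i : ℕ)) (-ω j))
      = (Matrix.diagonal (fun i : Fin N => (-1:ℝ)^(L+(i:ℕ)))) * (Dmat L N y) *
          (Matrix.diagonal (fun j : Fin N => Real.exp (ω j))) := by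
    ext i j
    rw [Matrix.mul_diagonal, Matrix.diagonal_mul, Matrix.of_apply]
    show ((L + (i : ℕ)).factorial : ℝ) * Real.exp (ω j) * laguerre (L + (i : ℕ)) (-ω j)
      = (-1:ℝ)^(L+(i:ℕ)) * (Dmat L N y i j) * Real.exp (ω j)
    rw [Dmat, Matrix.of_apply, hy]
    show _ = (-1:ℝ)^(L+(i:ℕ)) * piL (L + (i:ℕ)) (-ω j) * Real.exp (ω j)
    rw [piL]
    have hsq : (-1:ℝ)^(L+(i:ℕ)) * (-1:ℝ)^(L+(i:ℕ)) = 1 := by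
      rw [← mul_pow]; norm_num
    linear_combination (-(((L + (i : ℕ)).factorial : ℝ) * Real.exp (ω j)
      * laguerre (L + (i : ℕ)) (-ω j))) * hsq
  have hdetL : Matrix.det (Matrix.of fun i j : Fin N =>
      (((L + (i : ℕ)).factorial : ℝ)) * Real.exp (ω j) * laguerre (L + (i : ℕ)) (-ω j))
      = (cLN * cS) * E * D := by
    rw [hmat, Matrix.det_mul, Matrix.det_mul, Matrix.det_diagonal, Matrix.det_diagonal]
    have h1 : (∏ i : Fin N, (-1:ℝ)^(L+(i:ℕ))) = cLN * cS := by
      have hpa : ∀ i : Fin N, (-1:ℝ)^(L+(i:ℕ)) = (-1:ℝ)^L * (-1:ℝ)^(i:ℕ) :=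
        fun i => by rw [pow_add]
      rw [Finset.prod_congr rfl (fun (i : Fin N) _ => hpa i), Finset.prod_mul_distrib,
        Finset.prod_const,
        Finset.card_univ, Fintype.card_fin, ← pow_mul,
        Finset.prod_pow_eq_pow_sum Finset.univ (fun i : Fin N => (i:ℕ)) (-1:ℝ)]
    rw [h1, hD, hE]
    ring
  -- conclude
  have hne : (F * ∏ j ∈ Finset.Icc 1 (L - 1), ((j.factorial : ℝ)) ^ 2) ≠ 0 := by
    apply mul_ne_zero
    · exact Nat.cast_ne_zero.mpr (Nat.factorial_ne_zero L)
    · exact Finset.prod_ne_zero_iff.mpr fun j _ =>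
        pow_ne_zero _ (Nat.cast_ne_zero.mpr (Nat.factorial_ne_zero j))
  rw [hdetL, eq_div_iff hne, hP1]
  have hsq1 : cLN * cLN = 1 := by rw [hcLN, ← mul_pow]; norm_num
  have hsq2 : cS * cS = 1 := by rw [hcS, ← mul_pow]; norm_num
  linear_combination (-(cLN * cS * E)) * key
    + (E * vand ω * Ntilde N L ω * cS * cS) * hsq1
    + (E * vand ω * Ntilde N L ω) * hsq2
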